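/- Let w = (w_1,…,w_n) be a word of length n ≥ 1 over a linearly ordered alphabet A, and let c(w) = (w_2,…,w_n,w_1). Then maj(c(w)) = maj(w) − cdes(w) if w_n ≤ w_1, and maj(c(w)) = maj(w) − cdes(w) + n if w_n > w_1. In particular, maj(c(w)) ≡ maj(w) − cdes(w) (mod n). -/

import Mathlib

/-- The (leftward) cyclic shift on words of length `n`:
`c(w₁,…,wₙ) = (w₂,…,wₙ,w₁)`. -/
def cshift {A : Type*} {n : ℕ} (w : Fin n → A) : Fin n → A :=
  fun i => w ⟨((i : ℕ) + 1) % n, Nat.mod_lt _ i.pos⟩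

/-- The major index of a word: `maj w = Σ_{1 ≤ i ≤ n-1, w_i > w_{i+1}} i`
(here positions are 0-indexed, so position `i : Fin n` is the `(i+1)`-st letter). -/
def majIdx {A : Type*} [LinearOrder A] {n : ℕ} (w : Fin n → A) : ℕ :=
  ∑ i : Fin n,
    if h : (i : ℕ) + 1 < n then (if w ⟨(i : ℕ) + 1, h⟩ < w i then (i : ℕ) + 1 else 0) else 0

/-- The number of cyclic descents of a word, `cdes w = #{i : w_i > w_{i+1}}`
with indices read cyclically (`w_{n+1} := w_1`). -/
def cdes {A : Type*} [LinearOrder A] {n : ℕ} (w : Fin n → A) : ℕ :=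
  (Finset.univ.filter fun i : Fin n =>
    w ⟨((i : ℕ) + 1) % n, Nat.mod_lt _ i.pos⟩ < w i).card

/-- The inversion number of a word: `inv w = #{(i,j) : i < j, w_i > w_j}`. -/
def invNum {A : Type*} [LinearOrder A] {n : ℕ} (w : Fin n → A) : ℕ :=
  (Finset.univ.filter fun p : Fin n × Fin n => p.1 < p.2 ∧ w p.2 < w p.1).card

/-- The Hamming weight of a binary word: the number of ones. -/
def wt {n : ℕ} (w : Fin n → Bool) : ℕ :=
  (Finset.univ.filter fun i => w i = true).card

/-- The triple `(X, Σ_{x ∈ X} t^{stat x}, C)` exhibits the cyclic sieving phenomenon,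
where `C` is the cyclic group of order `n` generated by the cyclic shift `c` acting on `X`:
for every `d`, the number of fixed points of `c^d` on `X` equals the evaluation of
`Σ_{x ∈ X} t^{stat x}` at `t = ζ^d`, with `ζ = exp(2πi/n)`. -/
def exhibitsCSP {A : Type*} [DecidableEq A] {n : ℕ} (X : Finset (Fin n → A))
    (stat : (Fin n → A) → ℕ) : Prop :=
  ∀ d : ℕ,
    ((X.filter fun v => cshift^[d] v = v).card : ℂ) =
      ∑ v ∈ X, Complex.exp (2 * (Real.pi : ℂ) * Complex.I / n) ^ (d * stat v)


/-- cyclic descent indicator -/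
def dInd {A : Type*} [LinearOrder A] {n : ℕ} (w : Fin n → A) (j : Fin n) : ℕ :=
  if w ⟨((j : ℕ) + 1) % n, Nat.mod_lt _ j.pos⟩ < w j then 1 else 0

lemma cdes_eq_sum {A : Type*} [LinearOrder A] {n : ℕ} (w : Fin n → A) :
    cdes w = ∑ j : Fin n, dInd w j := by
  unfold cdes dInd
  rw [Finset.card_filter]

lemma val_add_one {n : ℕ} [NeZero n] (i : Fin n) :
    ((i + 1 : Fin n) : ℕ) = ((i : ℕ) + 1) % n := by
  rw [Fin.add_def, Fin.val_one']
  conv_rhs => rw [Nat.add_mod, Nat.mod_eq_of_lt i.isLt]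

lemma maj_cshift {A : Type*} [LinearOrder A] {n : ℕ} [NeZero n] (w : Fin n → A) :
    majIdx (cshift w) = ∑ j : Fin n, (j : ℕ) * dInd w j := by
  rw [← Equiv.sum_comp (Equiv.addRight (1 : Fin n)) (fun j : Fin n => (j : ℕ) * dInd w j)]
  unfold majIdx cshift
  apply Finset.sum_congr rfl
  intro i _
  simp only [Equiv.coe_addRight]
  by_cases h : (i : ℕ) + 1 < n
  · rw [dif_pos h]
    have e1 : (i + 1 : Fin n) = ⟨(i : ℕ) + 1, h⟩ := by
      apply Fin.ext; rw [val_add_one]; exact Nat.mod_eq_of_lt h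
    rw [e1]
    simp only [dInd, Nat.mod_eq_of_lt h]
    split <;> simp
  · rw [dif_neg h]
    have hv : ((i + 1 : Fin n) : ℕ) = 0 := by
      rw [val_add_one]
      have : (i : ℕ) + 1 = n := by have := i.isLt; omega
      simp [this]
    rw [hv]
    simp

lemma maj_plus {A : Type*} [LinearOrder A] {n : ℕ} (hn : 1 ≤ n) (w : Fin n → A) :
    ∑ j : Fin n, ((j : ℕ) + 1) * dInd w j
      = majIdx w + n * dInd w ⟨n - 1, Nat.sub_lt hn Nat.one_pos⟩ := by
  have hsplit : ∀ j : Fin n, ((j : ℕ) + 1) * dInd w j =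
      (if h : (j : ℕ) + 1 < n then (if w ⟨(j : ℕ) + 1, h⟩ < w j then (j : ℕ) + 1 else 0) else 0)
      + (if j = ⟨n - 1, Nat.sub_lt hn Nat.one_pos⟩ then n * dInd w j else 0) := by
    intro j
    by_cases h : (j : ℕ) + 1 < n
    · have hj : j ≠ ⟨n - 1, Nat.sub_lt hn Nat.one_pos⟩ := by
        intro e
        rw [e] at h
        simp at h
        omega
      rw [dif_pos h, if_neg hj, add_zero]
      simp only [dInd, Nat.mod_eq_of_lt h]
      split <;> simp
    · have hj : j = ⟨n - 1, Nat.sub_lt hn Nat.one_pos⟩ := by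
        apply Fin.ext
        have := j.isLt
        simp only []
        omega
      rw [dif_neg h, if_pos hj, zero_add]
      have hv : (j : ℕ) = n - 1 := by rw [hj]
      rw [hv, hj]
      congr 1
      omega
  rw [Finset.sum_congr rfl (fun j _ => hsplit j), Finset.sum_add_distrib]
  congr 1
  rw [Finset.sum_ite_eq' Finset.univ _ (fun j => n * dInd w j)]
  simp


/-- with c(w) = (w_2,…,w_n,w_1), one has
maj(c(w)) = maj(w) - cdes(w) if w_n ≤ w_1, and
maj(c(w)) = maj(w) - cdes(w) + n if w_n > w_1; in particular
maj(c(w)) ≡ maj(w) - cdes(w) (mod n). -/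
theorem stmt3 {A : Type*} [LinearOrder A] {n : ℕ} (hn : 1 ≤ n) (w : Fin n → A) :
    (w ⟨n - 1, by omega⟩ ≤ w ⟨0, by omega⟩ →
      (majIdx (cshift w) : ℤ) = (majIdx w : ℤ) - cdes w) ∧
    (w ⟨0, by omega⟩ < w ⟨n - 1, by omega⟩ →
      (majIdx (cshift w) : ℤ) = (majIdx w : ℤ) - cdes w + n) ∧
    Int.ModEq (n : ℤ) (majIdx (cshift w)) ((majIdx w : ℤ) - cdes w) := by
  haveI : NeZero n := ⟨by omega⟩
  have hD : dInd w ⟨n - 1, by omega⟩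
      = if w ⟨0, by omega⟩ < w ⟨n - 1, by omega⟩ then 1 else 0 := by
    have h0 : (n - 1 + 1) % n = 0 := by
      rw [Nat.sub_add_cancel hn, Nat.mod_self]
    simp only [dInd, h0]
  have key : majIdx (cshift w) + cdes w
      = majIdx w + n * (if w ⟨0, by omega⟩ < w ⟨n - 1, by omega⟩ then 1 else 0) := by
    rw [maj_cshift, cdes_eq_sum, ← Finset.sum_add_distrib, ← hD, ← maj_plus hn w]
    apply Finset.sum_congr rfl
    intro j _
    ring
  have keyZ : (majIdx (cshift w) : ℤ) + cdes w
      = majIdx w + n * (if w ⟨0, by omega⟩ < w ⟨n - 1, by omega⟩ then 1 else 0) := by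
    exact_mod_cast congrArg (Nat.cast : ℕ → ℤ) key
  refine ⟨?_, ?_, ?_⟩
  · intro hle
    rw [if_neg (not_lt.mpr hle)] at keyZ
    omega
  · intro hlt
    rw [if_pos hlt] at keyZ
    omega
  · by_cases hc : w ⟨0, by omega⟩ < w ⟨n - 1, by omega⟩
    · rw [if_pos hc] at keyZ
      exact Int.ModEq.symm (Int.modEq_iff_dvd.mpr ⟨1, by omega⟩)
    · rw [if_neg hc] at keyZ
      exact Int.ModEq.symm (Int.modEq_iff_dvd.mpr ⟨0, by omega⟩)
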